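/- Let j : P → Q, f : P → A, g : Q → B, h : A → B be homomorphisms of commutative monoids (written additively) with h ∘ f = g ∘ j. Assume that for every q ∈ Q there exists a positive integer m such that m•q lies in the image of j, that h is injective, and that B is sharp, i.e., 0 is the only invertible element of B. Then the kernel of g is g⁻¹(0) = {q ∈ Q : there exist a positive integer m and an element k ∈ f⁻¹(0) with m•q = j(k)}. -/

import Mathlib

/-- Let `j : P → Q`, `f : P → A`, `g : Q → B`, `h : A → B` be
homomorphisms of commutative monoids (written additively) with `h ∘ f = g ∘ j`.
Assume that for every `q ∈ Q` some positive multiple of `q` lies in the image of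
`j`, that `h` is injective, and that `B` is sharp (its only invertible element is
`0`).  Then `g⁻¹(0) = {q : ∃ m > 0, ∃ k ∈ f⁻¹(0), m • q = j k}`. -/
theorem kernel_of_chart_for_system_of_denominators
    {P Q A B : Type u} [AddCommMonoid P] [AddCommMonoid Q] [AddCommMonoid A]
    [AddCommMonoid B] (j : P →+ Q) (f : P →+ A) (g : Q →+ B) (h : A →+ B)
    (hcomm : h.comp f = g.comp j)
    (hkum : ∀ q : Q, ∃ m : ℕ, 0 < m ∧ m • q ∈ Set.range j)
    (hinj : Function.Injective h)
    (hsharp : ∀ b : B, IsAddUnit b → b = 0) :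
    ∀ q : Q, g q = 0 ↔ ∃ (m : ℕ) (k : P), 0 < m ∧ f k = 0 ∧ m • q = j k := by
  intro q
  constructor
  · intro hq
    obtain ⟨m, hm, p, hp⟩ := hkum q
    refine ⟨m, p, hm, ?_, hp.symm⟩
    apply hinj
    have := DFunLike.congr_fun hcomm p
    simp only [AddMonoidHom.comp_apply] at this
    rw [this, hp, map_nsmul, hq, smul_zero, map_zero]
  · rintro ⟨m, k, hm, hfk, hmq⟩
    have hgj : g (j k) = 0 := by
      have := DFunLike.congr_fun hcomm k
      simp only [AddMonoidHom.comp_apply] at this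
      rw [← this, hfk, map_zero]
    have hms : m • g q = 0 := by rw [← map_nsmul, hmq, hgj]
    apply hsharp
    exact IsAddUnit.of_add_eq_zero ((m-1) • g q)
      (by rw [← succ_nsmul', Nat.sub_add_cancel hm]; exact hms)
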